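/- Let A = {(x,y) : x,y ∈ ℤ²_{≥0}, det(x,y) = 1}. Then Σ_{(x,y)∈A} (|x| + |y| - |x+y|) = 2. -/

import Mathlib

namespace Stmt8

abbrev V := ℤ × ℤ
abbrev P := V × V

def detP (p : P) : ℤ := p.1.1 * p.2.2 - p.1.2 * p.2.1

def Good (p : P) : Prop :=
  0 ≤ p.1.1 ∧ 0 ≤ p.1.2 ∧ 0 ≤ p.2.1 ∧ 0 ≤ p.2.2 ∧ detP p = 1

def stepL (p : P) : P := (p.1, p.1 + p.2)
def stepR (p : P) : P := (p.1 + p.2, p.2)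

def node : List Bool → P
  | [] => ((1, 0), (0, 1))
  | b :: w => if b then stepL (node w) else stepR (node w)

lemma good_node (w : List Bool) : Good (node w) := by
  induction w with
  | nil => exact ⟨by simp [node], by simp [node], by simp [node], by simp [node], by rfl⟩
  | cons b w ih =>
    obtain ⟨h1, h2, h3, h4, h5⟩ := ih
    cases b <;>
      simp only [node, if_true, if_false, stepL, stepR, Bool.false_eq_true] <;>
      refine ⟨?_, ?_, ?_, ?_, ?_⟩ <;>
      simp only [Prod.fst_add, Prod.snd_add, detP] at h5 ⊢ <;>
      try omega
    · ring_nf; ring_nf at h5; linarith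
    · ring_nf; ring_nf at h5; linarith

lemma good_x_pos {p : P} (h : Good p) : 1 ≤ p.1.1 + p.1.2 := by
  obtain ⟨h1, h2, h3, h4, h5⟩ := h
  simp only [detP] at h5; nlinarith

lemma good_y_pos {p : P} (h : Good p) : 1 ≤ p.2.1 + p.2.2 := by
  obtain ⟨h1, h2, h3, h4, h5⟩ := h
  simp only [detP] at h5; nlinarith

lemma node_ne_root {b : Bool} {w : List Bool} : node (b :: w) ≠ node [] := by
  have h := good_node w
  have hx := good_x_pos h
  have hy := good_y_pos h
  obtain ⟨h1, h2, h3, h4, h5⟩ := h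
  cases b <;> simp only [node, if_true, if_false, Bool.false_eq_true, stepL, stepR] <;>
    intro hc <;> rw [Prod.ext_iff, Prod.ext_iff, Prod.ext_iff] at hc <;>
    simp only [Prod.fst_add, Prod.snd_add] at hc <;> omega

lemma node_injective : Function.Injective node := by
  intro w; induction w with
  | nil => intro w' h; cases w' with
    | nil => rfl
    | cons b u => exact absurd h.symm node_ne_root
  | cons b w ih =>
    intro w' h
    cases w' with
    | nil => exact absurd h node_ne_root
    | cons b' u =>
      have hw := good_node w
      have hu := good_node u
      have hxw := good_x_pos hw
      have hyw := good_y_pos hw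
      have hxu := good_x_pos hu
      have hyu := good_y_pos hu
      obtain ⟨a1, a2, a3, a4, a5⟩ := hw
      obtain ⟨c1, c2, c3, c4, c5⟩ := hu
      cases b <;> cases b' <;>
        simp only [node, if_true, if_false, Bool.false_eq_true, stepL, stepR] at h <;>
        rw [Prod.ext_iff, Prod.ext_iff, Prod.ext_iff] at h <;>
        simp only [Prod.fst_add, Prod.snd_add] at h
      · -- false false : stepR = stepR
        have : node w = node u := by
          have := hxw; apply Prod.ext <;> apply Prod.ext <;> omega
        rw [ih this]
      · -- false true : stepR w = stepL u : (x+y,y) = (x', x'+y')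
        exfalso; omega
      · exfalso; omega
      · have : node w = node u := by
          apply Prod.ext <;> apply Prod.ext <;> omega
        rw [ih this]


def level : ℕ → Finset (List Bool)
  | 0 => {[]}
  | n + 1 => (level n).image (true :: ·) ∪ (level n).image (false :: ·)

lemma mem_level {n : ℕ} {w : List Bool} : w ∈ level n ↔ w.length = n := by
  induction n generalizing w with
  | zero => simp [level, List.length_eq_zero_iff]
  | succ n ih =>
    simp only [level, Finset.mem_union, Finset.mem_image]
    constructor
    · rintro (⟨u, hu, rfl⟩ | ⟨u, hu, rfl⟩) <;> simp [ih.mp hu]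
    · intro hw
      cases w with
      | nil => simp at hw
      | cons b u =>
        simp only [List.length_cons, Nat.add_right_cancel_iff] at hw
        cases b
        · exact Or.inr ⟨u, ih.mpr hw, rfl⟩
        · exact Or.inl ⟨u, ih.mpr hw, rfl⟩

lemma sum_level_succ (F : P → ℝ) (n : ℕ) :
    ∑ w ∈ level (n + 1), F (node w)
      = ∑ w ∈ level n, (F (stepL (node w)) + F (stepR (node w))) := by
  rw [show level (n+1) = (level n).image (true :: ·) ∪ (level n).image (false :: ·) from rfl]
  rw [Finset.sum_union, Finset.sum_image (by intros; simp_all), Finset.sum_image (by intros; simp_all),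
    ← Finset.sum_add_distrib]
  · apply Finset.sum_congr rfl
    intro w _
    simp [node]
  · rw [Finset.disjoint_left]
    intro a ha hb
    rw [Finset.mem_image] at ha hb
    obtain ⟨u, _, rfl⟩ := ha
    obtain ⟨v, _, hv⟩ := hb
    simp at hv

lemma stripL : ∀ (t : ℕ) (w : List Bool) (x1 x2 y1 y2 : ℤ), 0 ≤ y1 → 0 ≤ y2 →
    node w = ((x1, x2), (y1 + t * x1, y2 + t * x2)) →
    ∃ u, node u = ((x1, x2), (y1, y2)) ∧ u.length + t = w.length := by
  intro t
  induction t with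
  | zero =>
    intro w x1 x2 y1 y2 _ _ h
    refine ⟨w, ?_, by omega⟩
    simpa using h
  | succ t ih =>
    intro w x1 x2 y1 y2 hy1 hy2 h
    cases w with
    | nil =>
      exfalso
      simp only [node, Prod.mk.injEq] at h
      obtain ⟨⟨hx1, hx2⟩, hy1', hy2'⟩ := h
      subst hx1
      push_cast at hy1'
      have ht : (0:ℤ) ≤ (t:ℤ) := Int.natCast_nonneg t
      nlinarith
    | cons b w' =>
      rcases hq : node w' with ⟨⟨q11, q12⟩, q21, q22⟩
      have hg := good_node w'
      rw [hq] at hg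
      obtain ⟨a1, a2, a3, a4, a5⟩ := hg
      simp only [detP] at a5
      simp only at a1 a2 a3 a4 a5
      cases b
      · -- stepR child : contradiction
        exfalso
        simp only [node, if_false, Bool.false_eq_true, stepR, hq, Prod.mk.injEq,
          Prod.mk_add_mk] at h
        obtain ⟨⟨h1, h2⟩, h3, h4⟩ := h
        push_cast at h3 h4
        have hr1 : ((t:ℤ) + 1) * x1 = (t:ℤ) * x1 + x1 := by ring
        have hr2 : ((t:ℤ) + 1) * x2 = (t:ℤ) * x2 + x2 := by ring
        have hx1 : 0 ≤ x1 := by omega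
        have hx2 : 0 ≤ x2 := by omega
        have ht1 : 0 ≤ (t:ℤ) * x1 := by positivity
        have ht2 : 0 ≤ (t:ℤ) * x2 := by positivity
        have hy10 : y1 = 0 := by omega
        have hy20 : y2 = 0 := by omega
        subst hy10 hy20
        -- q21 = (t+1) x1, q22 = (t+1) x2, q11 = x1 - q21, det = 1
        have : (0:ℤ) = 1 := by linear_combination a5 - q22*h1 + q21*h2 - x1*h4 + x2*h3
        norm_num at this
      · -- stepL child : recurse
        simp only [node, if_true, stepL, hq, Prod.mk.injEq, Prod.mk_add_mk] at h
        obtain ⟨⟨h1, h2⟩, h3, h4⟩ := h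
        push_cast at h3 h4
        have hr1 : ((t:ℤ) + 1) * x1 = (t:ℤ) * x1 + x1 := by ring
        have hr2 : ((t:ℤ) + 1) * x2 = (t:ℤ) * x2 + x2 := by ring
        have h' : node w' = ((x1, x2), (y1 + t * x1, y2 + t * x2)) := by
          rw [hq, Prod.mk.injEq, Prod.mk.injEq, Prod.mk.injEq]
          push_cast
          refine ⟨⟨by omega, by omega⟩, by omega, by omega⟩
        obtain ⟨u, hu, hlen⟩ := ih w' x1 x2 y1 y2 hy1 hy2 h'
        exact ⟨u, hu, by simp only [List.length_cons]; omega⟩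


lemma stripR : ∀ (t : ℕ) (w : List Bool) (x1 x2 y1 y2 : ℤ), 0 ≤ x1 → 0 ≤ x2 →
    node w = ((x1 + t * y1, x2 + t * y2), (y1, y2)) →
    ∃ u, node u = ((x1, x2), (y1, y2)) ∧ u.length + t = w.length := by
  intro t
  induction t with
  | zero =>
    intro w x1 x2 y1 y2 _ _ h
    refine ⟨w, ?_, by omega⟩
    simpa using h
  | succ t ih =>
    intro w x1 x2 y1 y2 hx1 hx2 h
    cases w with
    | nil =>
      exfalso
      simp only [node, Prod.mk.injEq] at h
      obtain ⟨⟨hx1', hx2'⟩, hy1', hy2'⟩ := h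
      subst hy1' hy2'
      push_cast at hx2'
      have ht : (0:ℤ) ≤ (t:ℤ) := Int.natCast_nonneg t
      nlinarith
    | cons b w' =>
      rcases hq : node w' with ⟨⟨q11, q12⟩, q21, q22⟩
      have hg := good_node w'
      rw [hq] at hg
      obtain ⟨a1, a2, a3, a4, a5⟩ := hg
      simp only [detP] at a5
      simp only at a1 a2 a3 a4 a5
      cases b
      · -- stepR child : recurse
        simp only [node, if_false, Bool.false_eq_true, stepR, hq, Prod.mk.injEq,
          Prod.mk_add_mk] at h
        obtain ⟨⟨h1, h2⟩, h3, h4⟩ := h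
        push_cast at h1 h2
        have hr1 : ((t:ℤ) + 1) * y1 = (t:ℤ) * y1 + y1 := by ring
        have hr2 : ((t:ℤ) + 1) * y2 = (t:ℤ) * y2 + y2 := by ring
        have h' : node w' = ((x1 + t * y1, x2 + t * y2), (y1, y2)) := by
          rw [hq, Prod.mk.injEq, Prod.mk.injEq, Prod.mk.injEq]
          push_cast
          refine ⟨⟨by omega, by omega⟩, by omega, by omega⟩
        obtain ⟨u, hu, hlen⟩ := ih w' x1 x2 y1 y2 hx1 hx2 h'
        exact ⟨u, hu, by simp only [List.length_cons]; omega⟩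
      · -- stepL child : contradiction
        exfalso
        simp only [node, if_true, stepL, hq, Prod.mk.injEq, Prod.mk_add_mk] at h
        obtain ⟨⟨h1, h2⟩, h3, h4⟩ := h
        push_cast at h1 h2
        have hr1 : ((t:ℤ) + 1) * y1 = (t:ℤ) * y1 + y1 := by ring
        have hr2 : ((t:ℤ) + 1) * y2 = (t:ℤ) * y2 + y2 := by ring
        have hy1 : 0 ≤ y1 := by omega
        have hy2 : 0 ≤ y2 := by omega
        have ht1 : 0 ≤ (t:ℤ) * y1 := by positivity
        have ht2 : 0 ≤ (t:ℤ) * y2 := by positivity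
        have hx10 : x1 = 0 := by omega
        have hx20 : x2 = 0 := by omega
        subst hx10 hx20
        have : (0:ℤ) = 1 := by
          linear_combination a5 - q11*h4 + q12*h3 - y2*h1 + y1*h2
        norm_num at this

-- fixed-length injectivity in the first component
lemma x_fst_inj {w w' : List Bool} (hl : w.length = w'.length)
    (hx : (node w).1 = (node w').1) : w = w' := by
  rcases hw : node w with ⟨⟨x1, x2⟩, y1, y2⟩
  rcases hw' : node w' with ⟨⟨x1', x2'⟩, y1', y2'⟩
  have hgw := good_node w; rw [hw] at hgw
  have hgw' := good_node w'; rw [hw'] at hgw'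
  obtain ⟨a1, a2, a3, a4, ha⟩ := hgw
  obtain ⟨b1, b2, b3, b4, hb⟩ := hgw'
  simp only [detP] at ha hb
  simp only at a1 a2 a3 a4 ha b1 b2 b3 b4 hb
  rw [hw, hw'] at hx
  obtain ⟨hx1, hx2⟩ : x1 = x1' ∧ x2 = x2' := by
    simpa [Prod.ext_iff] using hx
  subst hx1 hx2
  set t : ℤ := y2 * (y1' - y1) - y1 * (y2' - y2) with hts
  have ht1 : t * x1 = y1' - y1 := by linear_combination y1' * ha - y1 * hb
  have ht2 : t * x2 = y2' - y2 := by linear_combination y2' * ha - y2 * hb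
  rcases le_or_gt 0 t with htp | htn
  · have heq : node w' = ((x1, x2), (y1 + t.toNat * x1, y2 + t.toNat * x2)) := by
      rw [hw', Prod.mk.injEq, Prod.mk.injEq, Prod.mk.injEq]
      rw [Int.toNat_of_nonneg htp]
      refine ⟨⟨rfl, rfl⟩, by linear_combination -ht1, by linear_combination -ht2⟩
    obtain ⟨u, hu, hlen⟩ := stripL t.toNat w' x1 x2 y1 y2 a3 a4 heq
    have huw : u = w := node_injective (by rw [hu, hw])
    subst huw
    have : t.toNat = 0 := by omega
    have ht0 : t = 0 := by omega
    apply node_injective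
    rw [hw, hw']
    rw [ht0] at ht1 ht2
    have e1 : y1 = y1' := by linear_combination ht1
    have e2 : y2 = y2' := by linear_combination ht2
    rw [e1, e2]
  · exfalso
    have heq : node w = ((x1, x2), (y1' + (-t).toNat * x1, y2' + (-t).toNat * x2)) := by
      rw [hw, Prod.mk.injEq, Prod.mk.injEq, Prod.mk.injEq]
      rw [Int.toNat_of_nonneg (by omega : (0:ℤ) ≤ -t)]
      refine ⟨⟨rfl, rfl⟩, by linear_combination ht1, by linear_combination ht2⟩
    obtain ⟨u, hu, hlen⟩ := stripL (-t).toNat w x1 x2 y1' y2' b3 b4 heq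
    have huw : u = w' := node_injective (by rw [hu, hw'])
    subst huw
    omega

-- fixed-length injectivity in the second component
lemma y_snd_inj {w w' : List Bool} (hl : w.length = w'.length)
    (hy : (node w).2 = (node w').2) : w = w' := by
  rcases hw : node w with ⟨⟨x1, x2⟩, y1, y2⟩
  rcases hw' : node w' with ⟨⟨x1', x2'⟩, y1', y2'⟩
  have hgw := good_node w; rw [hw] at hgw
  have hgw' := good_node w'; rw [hw'] at hgw'
  obtain ⟨a1, a2, a3, a4, ha⟩ := hgw
  obtain ⟨b1, b2, b3, b4, hb⟩ := hgw'
  simp only [detP] at ha hb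
  simp only at a1 a2 a3 a4 ha b1 b2 b3 b4 hb
  rw [hw, hw'] at hy
  obtain ⟨hy1, hy2⟩ : y1 = y1' ∧ y2 = y2' := by
    simpa [Prod.ext_iff] using hy
  subst hy1 hy2
  set t : ℤ := x1 * (x2' - x2) - x2 * (x1' - x1) with hts
  have ht1 : t * y1 = x1' - x1 := by linear_combination x1' * ha - x1 * hb
  have ht2 : t * y2 = x2' - x2 := by linear_combination x2' * ha - x2 * hb
  rcases le_or_gt 0 t with htp | htn
  · have heq : node w' = ((x1 + t.toNat * y1, x2 + t.toNat * y2), (y1, y2)) := by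
      rw [hw', Prod.mk.injEq, Prod.mk.injEq, Prod.mk.injEq]
      rw [Int.toNat_of_nonneg htp]
      refine ⟨⟨by linear_combination -ht1, by linear_combination -ht2⟩, rfl, rfl⟩
    obtain ⟨u, hu, hlen⟩ := stripR t.toNat w' x1 x2 y1 y2 a1 a2 heq
    have huw : u = w := node_injective (by rw [hu, hw])
    subst huw
    have : t.toNat = 0 := by omega
    have ht0 : t = 0 := by omega
    apply node_injective
    rw [hw, hw']
    rw [ht0] at ht1 ht2
    have e1 : x1 = x1' := by linear_combination ht1
    have e2 : x2 = x2' := by linear_combination ht2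
    rw [e1, e2]
  · exfalso
    have heq : node w = ((x1' + (-t).toNat * y1, x2' + (-t).toNat * y2), (y1, y2)) := by
      rw [hw, Prod.mk.injEq, Prod.mk.injEq, Prod.mk.injEq]
      rw [Int.toNat_of_nonneg (by omega : (0:ℤ) ≤ -t)]
      refine ⟨⟨by linear_combination ht1, by linear_combination ht2⟩, rfl, rfl⟩
    obtain ⟨u, hu, hlen⟩ := stripR (-t).toNat w x1' x2' y1 y2 b1 b2 heq
    have huw : u = w' := node_injective (by rw [hu, hw'])
    subst huw
    omega

-- surjectivity
lemma node_surj_aux : ∀ (n : ℕ) (p : P), Good p →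
    (p.1.1 + p.1.2 + p.2.1 + p.2.2).toNat ≤ n → ∃ w, node w = p := by
  intro n
  induction n with
  | zero =>
    intro p hp hle
    exfalso
    obtain ⟨h1, h2, h3, h4, h5⟩ := hp
    simp only [detP] at h5
    have hx : 1 ≤ p.1.1 + p.1.2 := by nlinarith
    omega
  | succ n ih =>
    rintro ⟨⟨x1, x2⟩, y1, y2⟩ hp hle
    obtain ⟨h1, h2, h3, h4, h5⟩ := hp
    simp only [detP] at h5
    simp only at h1 h2 h3 h4 h5 hle
    have hxp : 1 ≤ x1 + x2 := by nlinarith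
    have hyp : 1 ≤ y1 + y2 := by nlinarith
    have goL : (x1 ≤ y1 ∧ x2 ≤ y2) → ∃ w, node w = ((x1, x2), (y1, y2)) := by
      rintro ⟨hc1, hc2⟩
      have hq : Good ((x1, x2), (y1 - x1, y2 - x2)) := by
        refine ⟨h1, h2, show (0:ℤ) ≤ y1 - x1 by omega, show (0:ℤ) ≤ y2 - x2 by omega, ?_⟩
        show x1 * (y2 - x2) - x2 * (y1 - x1) = 1
        linear_combination h5
      obtain ⟨w, hw⟩ := ih ((x1, x2), (y1 - x1, y2 - x2)) hq
        (by show (x1 + x2 + (y1 - x1) + (y2 - x2)).toNat ≤ n; omega)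
      refine ⟨true :: w, ?_⟩
      simp only [node, if_true, stepL, hw, Prod.mk_add_mk]
      rw [show x1 + (y1 - x1) = y1 from by ring, show x2 + (y2 - x2) = y2 from by ring]
    have goR : (y1 ≤ x1 ∧ y2 ≤ x2) → ∃ w, node w = ((x1, x2), (y1, y2)) := by
      rintro ⟨hc1, hc2⟩
      have hq : Good ((x1 - y1, x2 - y2), (y1, y2)) := by
        refine ⟨show (0:ℤ) ≤ x1 - y1 by omega, show (0:ℤ) ≤ x2 - y2 by omega, h3, h4, ?_⟩
        show (x1 - y1) * y2 - (x2 - y2) * y1 = 1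
        linear_combination h5
      obtain ⟨w, hw⟩ := ih ((x1 - y1, x2 - y2), (y1, y2)) hq
        (by show ((x1 - y1) + (x2 - y2) + y1 + y2).toNat ≤ n; omega)
      refine ⟨false :: w, ?_⟩
      simp only [node, if_false, Bool.false_eq_true, stepR, hw, Prod.mk_add_mk]
      rw [show x1 - y1 + y1 = x1 from by ring, show x2 - y2 + y2 = x2 from by ring]
    rcases le_or_gt x1 y1 with hc1 | hc1 <;> rcases le_or_gt x2 y2 with hc2 | hc2
    · exact goL ⟨hc1, hc2⟩
    · -- x1 ≤ y1, y2 < x2 : impossible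
      exfalso
      nlinarith [mul_le_mul hc1 (by omega : y2 + 1 ≤ x2) (by omega : (0:ℤ) ≤ y2 + 1) h3]
    · -- y1 < x1, x2 ≤ y2
      rcases eq_or_lt_of_le hc2 with hc2e | hc2s
      · exact goR ⟨by omega, by omega⟩
      · -- y1 < x1, x2 < y2 : root
        have key := mul_le_mul (by omega : y1 + 1 ≤ x1) (by omega : x2 + 1 ≤ y2)
          (by omega : (0:ℤ) ≤ x2 + 1) h1
        have hsum : y1 + x2 ≤ 0 := by nlinarith [key]
        have hy1 : y1 = 0 := by omega
        have hx2 : x2 = 0 := by omega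
        subst hy1 hx2
        have h5' : x1 * y2 = 1 := by linear_combination h5
        have hx1 : x1 = 1 := by
          rcases Int.isUnit_iff.mp (IsUnit.of_mul_eq_one (a := x1) y2 h5') with h | h
          · exact h
          · omega
        have hy2 : y2 = 1 := by rw [hx1] at h5'; omega
        exact ⟨[], by rw [hx1, hy2]; rfl⟩
    · exact goR ⟨by omega, by omega⟩

lemma node_surjective {p : P} (h : Good p) : ∃ w, node w = p :=
  node_surj_aux (p.1.1 + p.1.2 + p.2.1 + p.2.2).toNat p h le_rfl


def N2 (v : V) : ℤ := v.1 ^ 2 + v.2 ^ 2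

noncomputable def nrm (v : V) : ℝ := Real.sqrt ((v.1 : ℝ) ^ 2 + (v.2 : ℝ) ^ 2)

noncomputable def dotP (p : P) : ℝ := ((p.1.1 * p.2.1 + p.1.2 * p.2.2 : ℤ) : ℝ)

noncomputable def fP (p : P) : ℝ := nrm p.1 + nrm p.2 - nrm (p.1 + p.2)

noncomputable def rho (p : P) : ℝ :=
  nrm p.1 + nrm p.2 - dotP p / nrm p.1 - dotP p / nrm p.2

noncomputable def ang (v : V) : ℝ := Real.arccos ((v.1 : ℝ) / nrm v)

lemma sq_nrm (v : V) : nrm v ^ 2 = ((N2 v : ℤ) : ℝ) := by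
  rw [nrm, Real.sq_sqrt (by positivity)]
  push_cast [N2]; ring

lemma nrm_nonneg (v : V) : 0 ≤ nrm v := Real.sqrt_nonneg _

lemma one_le_N2 {v : V} (h : v ≠ 0) : 1 ≤ N2 v := by
  have hne : v.1 ≠ 0 ∨ v.2 ≠ 0 := by
    by_contra hc; push_neg at hc; exact h (Prod.ext hc.1 hc.2)
  rw [N2]
  rcases hne with h1 | h1
  · have h2 : 0 < v.1 ^ 2 := by positivity
    have := sq_nonneg v.2; linarith
  · have h2 : 0 < v.2 ^ 2 := by positivity
    have := sq_nonneg v.1; linarith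

lemma one_le_nrm {v : V} (h : 1 ≤ N2 v) : 1 ≤ nrm v := by
  have h2 := sq_nrm v
  have hr : (1:ℝ) ≤ ((N2 v : ℤ) : ℝ) := by exact_mod_cast h
  nlinarith [nrm_nonneg v]

lemma good_x_ne {p : P} (hp : Good p) : p.1 ≠ 0 := by
  obtain ⟨h1, h2, h3, h4, h5⟩ := hp
  intro hc
  rw [detP, show p.1.1 = 0 from by rw [hc]; rfl, show p.1.2 = 0 from by rw [hc]; rfl] at h5
  simp at h5

lemma good_y_ne {p : P} (hp : Good p) : p.2 ≠ 0 := by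
  obtain ⟨h1, h2, h3, h4, h5⟩ := hp
  intro hc
  rw [detP, show p.2.1 = 0 from by rw [hc]; rfl, show p.2.2 = 0 from by rw [hc]; rfl] at h5
  simp at h5

lemma good_nrm_x {p : P} (hp : Good p) : 1 ≤ nrm p.1 :=
  one_le_nrm (one_le_N2 (good_x_ne hp))

lemma good_nrm_y {p : P} (hp : Good p) : 1 ≤ nrm p.2 :=
  one_le_nrm (one_le_N2 (good_y_ne hp))

lemma dotP_nonneg {p : P} (hp : Good p) : 0 ≤ dotP p := by
  obtain ⟨h1, h2, h3, h4, _⟩ := hp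
  rw [dotP]
  push_cast
  positivity

-- Lagrange : A * B = s^2 + 1
lemma lagrange {p : P} (hp : Good p) :
    ((N2 p.1 : ℤ) : ℝ) * ((N2 p.2 : ℤ) : ℝ) = dotP p ^ 2 + 1 := by
  have h5 := hp.2.2.2.2
  rw [detP] at h5
  rw [N2, N2, dotP]
  push_cast
  have : ((p.1.1 : ℝ) * p.2.2 - p.1.2 * p.2.1) = 1 := by exact_mod_cast congrArg (Int.cast : ℤ → ℝ) h5
  nlinarith [this]

lemma nrm_mul_eq {p : P} (hp : Good p) :
    (nrm p.1 * nrm p.2) ^ 2 = dotP p ^ 2 + 1 := by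
  rw [mul_pow, sq_nrm, sq_nrm]
  exact lagrange hp

-- generic identity
lemma rho_identity (a b c s : ℝ) (ha : 0 < a) (hb : 0 < b) (hc : 0 < c)
    (hcsq : c ^ 2 = a ^ 2 + b ^ 2 + 2 * s) :
    a + b - c = (a + b - s / a - s / b)
      - (a + c - (a ^ 2 + s) / a - (a ^ 2 + s) / c)
      - (c + b - (s + b ^ 2) / c - (s + b ^ 2) / b) := by
  field_simp
  linear_combination (a * b) * hcsq

lemma nrm_sum_sq {p : P} :
    nrm (p.1 + p.2) ^ 2 = nrm p.1 ^ 2 + nrm p.2 ^ 2 + 2 * dotP p := by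
  rw [sq_nrm, sq_nrm, sq_nrm, N2, N2, N2, dotP]
  push_cast
  simp only [Prod.fst_add, Prod.snd_add]
  push_cast
  ring

lemma dot_stepL {p : P} : dotP (stepL p) = nrm p.1 ^ 2 + dotP p := by
  rw [dotP, dotP, stepL, sq_nrm, N2]
  push_cast
  simp only [Prod.fst_add, Prod.snd_add]
  push_cast
  ring

lemma dot_stepR {p : P} : dotP (stepR p) = dotP p + nrm p.2 ^ 2 := by
  rw [dotP, dotP, stepR, sq_nrm, N2]
  push_cast
  simp only [Prod.fst_add, Prod.snd_add]
  push_cast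
  ring

lemma nrm_sum_pos {p : P} (hp : Good p) : 0 < nrm (p.1 + p.2) := by
  have h2 := nrm_sum_sq (p := p)
  nlinarith [good_nrm_x hp, good_nrm_y hp, dotP_nonneg hp, nrm_nonneg (p.1 + p.2)]

lemma key_node {p : P} (hp : Good p) :
    fP p = rho p - rho (stepL p) - rho (stepR p) := by
  have ha : (0:ℝ) < nrm p.1 := lt_of_lt_of_le one_pos (good_nrm_x hp)
  have hb : (0:ℝ) < nrm p.2 := lt_of_lt_of_le one_pos (good_nrm_y hp)
  have hc : (0:ℝ) < nrm (p.1 + p.2) := nrm_sum_pos hp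
  have hid := rho_identity (nrm p.1) (nrm p.2) (nrm (p.1 + p.2)) (dotP p) ha hb hc nrm_sum_sq
  rw [fP, rho, rho, rho, dot_stepL, dot_stepR]
  show nrm p.1 + nrm p.2 - nrm (p.1 + p.2) = _
  rw [show (stepL p).1 = p.1 from rfl, show (stepL p).2 = p.1 + p.2 from rfl,
    show (stepR p).1 = p.1 + p.2 from rfl, show (stepR p).2 = p.2 from rfl]
  linarith [hid]

lemma rho_nonneg {p : P} (hp : Good p) : 0 ≤ rho p := by
  have ha := good_nrm_x hp
  have hb := good_nrm_y hp
  have hs := dotP_nonneg hp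
  have hl := nrm_mul_eq hp
  have hab : 1 ≤ nrm p.1 * nrm p.2 := by nlinarith
  have hsab : dotP p ≤ nrm p.1 * nrm p.2 := by nlinarith
  have h1 : dotP p / nrm p.1 ≤ nrm p.2 := by
    rw [div_le_iff₀ (by linarith : (0:ℝ) < nrm p.1)]; nlinarith
  have h2 : dotP p / nrm p.2 ≤ nrm p.1 := by
    rw [div_le_iff₀ (by linarith : (0:ℝ) < nrm p.2)]; nlinarith
  rw [rho]; linarith

lemma fP_nonneg {p : P} (hp : Good p) : 0 ≤ fP p := by
  have ha := good_nrm_x hp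
  have hb := good_nrm_y hp
  have hs := dotP_nonneg hp
  have hl := nrm_mul_eq hp
  have hc := nrm_sum_pos hp
  have hcs := nrm_sum_sq (p := p)
  have hab : 1 ≤ nrm p.1 * nrm p.2 := by nlinarith
  have hsab : dotP p ≤ nrm p.1 * nrm p.2 := by nlinarith
  rw [fP]
  nlinarith [hc, hcs, hsab, ha, hb]

-- rho ≤ (2/K) / (a*b) when K ≤ a, K ≤ b, 1 ≤ K
lemma rho_le {p : P} (hp : Good p) {K : ℝ} (hK : 1 ≤ K)
    (hKa : K ≤ nrm p.1) (hKb : K ≤ nrm p.2) :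
    rho p ≤ 2 / (K * (nrm p.1 * nrm p.2)) := by
  have ha := good_nrm_x hp
  have hb := good_nrm_y hp
  have hs := dotP_nonneg hp
  have hl := nrm_mul_eq hp
  set a := nrm p.1
  set b := nrm p.2
  set s := dotP p
  have hab : 1 ≤ a * b := by nlinarith
  have hsab : s ≤ a * b := by nlinarith
  have h1 : rho p = (a + b) * (a * b - s) / (a * b) := by
    rw [rho]; show a + b - s / a - s / b = _
    have ha0 : a ≠ 0 := (by linarith : (0:ℝ) < a).ne'
    have hb0 : b ≠ 0 := (by linarith : (0:ℝ) < b).ne'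
    field_simp; ring
  rw [h1]
  rw [div_le_div_iff₀ (by nlinarith) (by nlinarith)]
  -- (a+b)(ab-s) * (K*(ab)) ≤ 2 * (ab)
  have hab1 : (a * b - s) * (a * b + s) = 1 := by nlinarith
  have e1 : K * a ≤ b * a := mul_le_mul_of_nonneg_right hKb (by linarith)
  have e2 : K * b ≤ a * b := mul_le_mul_of_nonneg_right hKa (by linarith)
  have h2' : K * (a + b) ≤ 2 * (a * b) := by nlinarith [e1, e2]
  have h3 : 0 ≤ a * b - s := by linarith
  have h4 : (a * b) * (a * b - s) ≤ 1 := by nlinarith [hab1, h3, hs]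
  calc (a + b) * (a * b - s) * (K * (a * b))
      = (K * (a + b)) * ((a * b) * (a * b - s)) := by ring
    _ ≤ (2 * (a * b)) * 1 := by
        apply mul_le_mul h2' h4 (by nlinarith [h3, hab]) (by nlinarith [hab])
    _ = 2 * (a * b) := by ring

-- angle lemma
lemma ang_facts {v : V} (h0 : 0 ≤ v.1) (h1 : 0 ≤ v.2) (hne : v ≠ 0) :
    Real.cos (ang v) = (v.1 : ℝ) / nrm v ∧ Real.sin (ang v) = (v.2 : ℝ) / nrm v := by
  have hN := one_le_N2 hne
  have hn := one_le_nrm hN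
  have hpos : (0:ℝ) < nrm v := lt_of_lt_of_le one_pos hn
  have hsq := sq_nrm v
  have hle : (v.1 : ℝ) ≤ nrm v := by
    rw [N2] at hsq; push_cast at hsq
    nlinarith [sq_nonneg ((v.2:ℝ))]
  have hn2 : nrm v ^ 2 = (v.1 : ℝ) ^ 2 + (v.2 : ℝ) ^ 2 := by
    rw [sq_nrm, N2]; push_cast; ring
  have hge : (0:ℝ) ≤ (v.1 : ℝ) / nrm v := by positivity
  have hle1 : (v.1 : ℝ) / nrm v ≤ 1 := by
    rw [div_le_one hpos]; exact hle
  refine ⟨Real.cos_arccos (by linarith) hle1, ?_⟩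
  rw [ang, Real.sin_arccos]
  have he : 1 - ((v.1 : ℝ) / nrm v) ^ 2 = ((v.2 : ℝ) / nrm v) ^ 2 := by
    field_simp
    linear_combination hn2
  rw [he, Real.sqrt_sq (by positivity)]

lemma ang_nonneg (v : V) : 0 ≤ ang v := Real.arccos_nonneg _
lemma ang_le_pi (v : V) : ang v ≤ Real.pi := Real.arccos_le_pi _

lemma ang_diff {p : P} (hp : Good p) :
    1 / (nrm p.1 * nrm p.2) ≤ ang p.2 - ang p.1 := by
  have hax := ang_facts hp.1 hp.2.1 (good_x_ne hp)
  have hay := ang_facts hp.2.2.1 hp.2.2.2.1 (good_y_ne hp)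
  have ha : (0:ℝ) < nrm p.1 := lt_of_lt_of_le one_pos (good_nrm_x hp)
  have hb : (0:ℝ) < nrm p.2 := lt_of_lt_of_le one_pos (good_nrm_y hp)
  have h5' : p.1.1 * p.2.2 - p.1.2 * p.2.1 = 1 := hp.2.2.2.2
  have hdet : ((p.1.1 : ℝ) * p.2.2 - p.1.2 * p.2.1) = 1 := by exact_mod_cast h5'
  have hsin : Real.sin (ang p.2 - ang p.1) = 1 / (nrm p.1 * nrm p.2) := by
    rw [Real.sin_sub, hax.1, hax.2, hay.1, hay.2]
    field_simp
    linear_combination hdet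
  have hpos : 0 < 1 / (nrm p.1 * nrm p.2) := by positivity
  have hd : 0 < ang p.2 - ang p.1 := by
    by_contra hc
    push_neg at hc
    have := Real.sin_nonpos_of_nonpos_of_neg_pi_le hc
      (by linarith [ang_nonneg p.2, ang_le_pi p.1])
    linarith [hsin ▸ this]
  calc 1 / (nrm p.1 * nrm p.2) = Real.sin (ang p.2 - ang p.1) := hsin.symm
    _ ≤ ang p.2 - ang p.1 := Real.sin_le hd.le

lemma ang_e1 : ang (1, 0) = 0 := by
  have : nrm ((1:ℤ), (0:ℤ)) = 1 := by
    rw [nrm]; norm_num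
  rw [ang, this]; norm_num

lemma ang_e2 : ang (0, 1) = Real.pi / 2 := by
  have : nrm ((0:ℤ), (1:ℤ)) = 1 := by
    rw [nrm]; norm_num
  rw [ang, this]; norm_num [Real.arccos_zero]


-- ===== level sums and bounds =====

lemma N2_sum (p : P) :
    N2 (p.1 + p.2) = N2 p.1 + N2 p.2 + 2 * (p.1.1 * p.2.1 + p.1.2 * p.2.2) := by
  rw [N2, N2, N2]
  simp only [Prod.fst_add, Prod.snd_add]
  ring

lemma node_cons_true (w : List Bool) : node (true :: w) = stepL (node w) := by simp [node]
lemma node_cons_false (w : List Bool) : node (false :: w) = stepR (node w) := by simp [node]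

lemma N2_prod_ge : ∀ (n : ℕ) (w : List Bool), w ∈ level n →
    (n : ℤ) + 1 ≤ N2 (node w).1 * N2 (node w).2 := by
  intro n
  induction n with
  | zero =>
    intro w _
    have h1 := one_le_N2 (good_x_ne (good_node w))
    have h2 := one_le_N2 (good_y_ne (good_node w))
    push_cast
    nlinarith
  | succ n ih =>
    intro w hw
    have hlen : w.length = n + 1 := mem_level.mp hw
    cases w with
    | nil => simp at hlen
    | cons b u =>
      have hu : u ∈ level n := mem_level.mpr (by simpa using hlen)
      have hIH := ih u hu
      have hg := good_node u
      have hs : 0 ≤ (node u).1.1 * (node u).2.1 + (node u).1.2 * (node u).2.2 := by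
        obtain ⟨h1, h2, h3, h4, _⟩ := hg
        positivity
      have hA := one_le_N2 (good_x_ne hg)
      have hB := one_le_N2 (good_y_ne hg)
      cases b
      · rw [node_cons_false]
        rw [show (stepR (node u)).1 = (node u).1 + (node u).2 from rfl,
            show (stepR (node u)).2 = (node u).2 from rfl, N2_sum]
        push_cast
        nlinarith
      · rw [node_cons_true]
        rw [show (stepL (node u)).1 = (node u).1 from rfl,
            show (stepL (node u)).2 = (node u).1 + (node u).2 from rfl, N2_sum]
        push_cast
        nlinarith

lemma nrm_prod_ge {n : ℕ} {w : List Bool} (hw : w ∈ level n) :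
    Real.sqrt ((n : ℝ) + 1) ≤ nrm (node w).1 * nrm (node w).2 := by
  have h := N2_prod_ge n w hw
  have h2 : (nrm (node w).1 * nrm (node w).2) ^ 2
      = ((N2 (node w).1 * N2 (node w).2 : ℤ) : ℝ) := by
    rw [mul_pow, sq_nrm, sq_nrm]; push_cast; ring
  have hnn : 0 ≤ nrm (node w).1 * nrm (node w).2 :=
    mul_nonneg (nrm_nonneg _) (nrm_nonneg _)
  have hcast : ((n : ℝ) + 1) ≤ ((N2 (node w).1 * N2 (node w).2 : ℤ) : ℝ) := by
    exact_mod_cast h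
  calc Real.sqrt ((n : ℝ) + 1)
      ≤ Real.sqrt ((N2 (node w).1 * N2 (node w).2 : ℤ) : ℝ) := Real.sqrt_le_sqrt hcast
    _ = nrm (node w).1 * nrm (node w).2 := by rw [← h2, Real.sqrt_sq hnn]

noncomputable def Rn (n : ℕ) : ℝ := ∑ w ∈ level n, rho (node w)
noncomputable def En (n : ℕ) : ℝ := ∑ w ∈ level n, fP (node w)

lemma Rn_succ (n : ℕ) : Rn n = Rn (n + 1) + En n := by
  rw [Rn, Rn, En, sum_level_succ rho n, ← Finset.sum_add_distrib]
  apply Finset.sum_congr rfl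
  intro w _
  linarith [key_node (good_node w)]

lemma Rn_zero : Rn 0 = 2 := by
  rw [Rn, show level 0 = {[]} from rfl, Finset.sum_singleton,
    show node [] = ((1, 0), (0, 1)) from rfl]
  norm_num [rho, dotP, nrm]

lemma Rn_nonneg (n : ℕ) : 0 ≤ Rn n :=
  Finset.sum_nonneg (fun w _ => rho_nonneg (good_node w))

lemma partial_sum (N : ℕ) : ∑ n ∈ Finset.range (N + 1), En n = 2 - Rn (N + 1) := by
  induction N with
  | zero =>
    rw [Finset.sum_range_one]
    linarith [Rn_succ 0, Rn_zero]
  | succ N ih =>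
    rw [Finset.sum_range_succ, ih]
    linarith [Rn_succ (N + 1)]

lemma ang_sum (n : ℕ) :
    ∑ w ∈ level n, (ang (node w).2 - ang (node w).1) = Real.pi / 2 := by
  induction n with
  | zero =>
    rw [show level 0 = {[]} from rfl, Finset.sum_singleton,
      show node [] = ((1, 0), (0, 1)) from rfl]
    rw [show (((1, 0), (0, 1)) : P).2 = (0, 1) from rfl,
      show (((1, 0), (0, 1)) : P).1 = (1, 0) from rfl, ang_e1, ang_e2]
    ring
  | succ n ih =>
    rw [sum_level_succ (fun p => ang p.2 - ang p.1) n, ← ih]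
    apply Finset.sum_congr rfl
    intro w _
    show (ang (stepL (node w)).2 - ang (stepL (node w)).1)
        + (ang (stepR (node w)).2 - ang (stepR (node w)).1) = _
    rw [show (stepL (node w)).1 = (node w).1 from rfl,
      show (stepL (node w)).2 = (node w).1 + (node w).2 from rfl,
      show (stepR (node w)).1 = (node w).1 + (node w).2 from rfl,
      show (stepR (node w)).2 = (node w).2 from rfl]
    ring

lemma ang_diff_nonneg {p : P} (hp : Good p) : 0 ≤ ang p.2 - ang p.1 := by
  have h := ang_diff hp
  have ha : (0:ℝ) < nrm p.1 := lt_of_lt_of_le one_pos (good_nrm_x hp)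
  have hb : (0:ℝ) < nrm p.2 := lt_of_lt_of_le one_pos (good_nrm_y hp)
  have : 0 < 1 / (nrm p.1 * nrm p.2) := by positivity
  linarith

-- counting lemmas
lemma count_x (n K : ℕ) :
    ((level n).filter (fun w => N2 (node w).1 ≤ (K : ℤ) ^ 2)).card ≤ (K + 1) ^ 2 := by
  classical
  have hcard : (Finset.range (K+1) ×ˢ Finset.range (K+1)).card = (K + 1) ^ 2 := by
    rw [Finset.card_product, Finset.card_range]; ring
  rw [← hcard]
  apply Finset.card_le_card_of_injOn (fun w => ((node w).1.1.toNat, (node w).1.2.toNat))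
  · intro w hw
    rw [Finset.mem_coe, Finset.mem_filter] at hw
    obtain ⟨hw1, hw2⟩ := hw
    obtain ⟨h1, h2, _, _, _⟩ := good_node w
    rw [N2] at hw2
    have e1 : (node w).1.1 ≤ (K : ℤ) := by nlinarith [sq_nonneg (node w).1.2]
    have e2 : (node w).1.2 ≤ (K : ℤ) := by nlinarith [sq_nonneg (node w).1.1]
    rw [Finset.mem_coe, Finset.mem_product, Finset.mem_range, Finset.mem_range]
    constructor <;> dsimp only <;> omega
  · intro w hw w' hw' heq
    rw [Finset.mem_coe, Finset.mem_filter] at hw hw'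
    obtain ⟨q1, q2⟩ : (node w).1.1.toNat = (node w').1.1.toNat
        ∧ (node w).1.2.toNat = (node w').1.2.toNat := by
      constructor
      · exact congrArg Prod.fst heq
      · exact congrArg Prod.snd heq
    obtain ⟨h1, h2, _, _, _⟩ := good_node w
    obtain ⟨h1', h2', _, _, _⟩ := good_node w'
    apply x_fst_inj (by rw [mem_level.mp hw.1, mem_level.mp hw'.1])
    apply Prod.ext <;> omega

lemma count_y (n K : ℕ) :
    ((level n).filter (fun w => N2 (node w).2 ≤ (K : ℤ) ^ 2)).card ≤ (K + 1) ^ 2 := by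
  classical
  have hcard : (Finset.range (K+1) ×ˢ Finset.range (K+1)).card = (K + 1) ^ 2 := by
    rw [Finset.card_product, Finset.card_range]; ring
  rw [← hcard]
  apply Finset.card_le_card_of_injOn (fun w => ((node w).2.1.toNat, (node w).2.2.toNat))
  · intro w hw
    rw [Finset.mem_coe, Finset.mem_filter] at hw
    obtain ⟨hw1, hw2⟩ := hw
    obtain ⟨_, _, h3, h4, _⟩ := good_node w
    rw [N2] at hw2
    have e1 : (node w).2.1 ≤ (K : ℤ) := by nlinarith [sq_nonneg (node w).2.2]
    have e2 : (node w).2.2 ≤ (K : ℤ) := by nlinarith [sq_nonneg (node w).2.1]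
    rw [Finset.mem_coe, Finset.mem_product, Finset.mem_range, Finset.mem_range]
    constructor <;> dsimp only <;> omega
  · intro w hw w' hw' heq
    rw [Finset.mem_coe, Finset.mem_filter] at hw hw'
    obtain ⟨q1, q2⟩ : (node w).2.1.toNat = (node w').2.1.toNat
        ∧ (node w).2.2.toNat = (node w').2.2.toNat := by
      constructor
      · exact congrArg Prod.fst heq
      · exact congrArg Prod.snd heq
    obtain ⟨_, _, h3, h4, _⟩ := good_node w
    obtain ⟨_, _, h3', h4', _⟩ := good_node w'
    apply y_snd_inj (by rw [mem_level.mp hw.1, mem_level.mp hw'.1])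
    apply Prod.ext <;> omega

lemma Rn_bound (K n : ℕ) (hK : 1 ≤ K) :
    Rn n ≤ 4 * ((K : ℝ) + 1) ^ 2 / Real.sqrt ((n : ℝ) + 1) + Real.pi / K := by
  classical
  have hsq : 0 < Real.sqrt ((n : ℝ) + 1) := Real.sqrt_pos.mpr (by positivity)
  have hKR : (1:ℝ) ≤ (K:ℝ) := by exact_mod_cast hK
  rw [Rn, ← Finset.sum_filter_add_sum_filter_not (level n)
    (fun w => N2 (node w).1 ≤ (K : ℤ) ^ 2 ∨ N2 (node w).2 ≤ (K : ℤ) ^ 2)]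
  have hbound1 :
      ∑ w ∈ (level n).filter
          (fun w => N2 (node w).1 ≤ (K : ℤ) ^ 2 ∨ N2 (node w).2 ≤ (K : ℤ) ^ 2),
        rho (node w) ≤ 4 * ((K : ℝ) + 1) ^ 2 / Real.sqrt ((n : ℝ) + 1) := by
    have hterm : ∀ w ∈ (level n).filter
        (fun w => N2 (node w).1 ≤ (K : ℤ) ^ 2 ∨ N2 (node w).2 ≤ (K : ℤ) ^ 2),
        rho (node w) ≤ 2 / Real.sqrt ((n : ℝ) + 1) := by
      intro w hw
      rw [Finset.mem_filter] at hw
      have hg := good_node w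
      have h1 : rho (node w) ≤ 2 / (1 * (nrm (node w).1 * nrm (node w).2)) :=
        rho_le hg le_rfl (good_nrm_x hg) (good_nrm_y hg)
      rw [one_mul] at h1
      refine h1.trans ?_
      apply div_le_div_of_nonneg_left (by norm_num) hsq (nrm_prod_ge hw.1)
    calc ∑ w ∈ (level n).filter
          (fun w => N2 (node w).1 ≤ (K : ℤ) ^ 2 ∨ N2 (node w).2 ≤ (K : ℤ) ^ 2),
          rho (node w)
        ≤ ∑ _w ∈ (level n).filter
          (fun w => N2 (node w).1 ≤ (K : ℤ) ^ 2 ∨ N2 (node w).2 ≤ (K : ℤ) ^ 2),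
          (2 / Real.sqrt ((n : ℝ) + 1)) := Finset.sum_le_sum hterm
      _ = ((level n).filter
          (fun w => N2 (node w).1 ≤ (K : ℤ) ^ 2 ∨ N2 (node w).2 ≤ (K : ℤ) ^ 2)).card
          * (2 / Real.sqrt ((n : ℝ) + 1)) := by
          rw [Finset.sum_const, nsmul_eq_mul]
      _ ≤ (2 * ((K : ℝ) + 1) ^ 2) * (2 / Real.sqrt ((n : ℝ) + 1)) := by
          apply mul_le_mul_of_nonneg_right _ (by positivity)
          have hsplit : ((level n).filter
              (fun w => N2 (node w).1 ≤ (K : ℤ) ^ 2 ∨ N2 (node w).2 ≤ (K : ℤ) ^ 2)).card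
              ≤ (K + 1) ^ 2 + (K + 1) ^ 2 := by
            rw [Finset.filter_or]
            exact le_trans (Finset.card_union_le _ _)
              (Nat.add_le_add (count_x n K) (count_y n K))
          calc (((level n).filter
              (fun w => N2 (node w).1 ≤ (K : ℤ) ^ 2 ∨ N2 (node w).2 ≤ (K : ℤ) ^ 2)).card : ℝ)
              ≤ (((K + 1) ^ 2 + (K + 1) ^ 2 : ℕ) : ℝ) := by exact_mod_cast hsplit
            _ = 2 * ((K : ℝ) + 1) ^ 2 := by push_cast; ring
      _ = 4 * ((K : ℝ) + 1) ^ 2 / Real.sqrt ((n : ℝ) + 1) := by ring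
  have hbound2 :
      ∑ w ∈ (level n).filter
          (fun w => ¬(N2 (node w).1 ≤ (K : ℤ) ^ 2 ∨ N2 (node w).2 ≤ (K : ℤ) ^ 2)),
        rho (node w) ≤ Real.pi / K := by
    have hterm : ∀ w ∈ (level n).filter
        (fun w => ¬(N2 (node w).1 ≤ (K : ℤ) ^ 2 ∨ N2 (node w).2 ≤ (K : ℤ) ^ 2)),
        rho (node w) ≤ (2 / K) * (ang (node w).2 - ang (node w).1) := by
      intro w hw
      rw [Finset.mem_filter] at hw
      push_neg at hw
      obtain ⟨hw1, hA, hB⟩ := hw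
      have hg := good_node w
      have hKa : (K : ℝ) ≤ nrm (node w).1 := by
        have h1 : ((K:ℝ))^2 < ((N2 (node w).1 : ℤ) : ℝ) := by exact_mod_cast hA
        have h2 := sq_nrm (node w).1
        nlinarith [nrm_nonneg (node w).1, hKR]
      have hKb : (K : ℝ) ≤ nrm (node w).2 := by
        have h1 : ((K:ℝ))^2 < ((N2 (node w).2 : ℤ) : ℝ) := by exact_mod_cast hB
        have h2 := sq_nrm (node w).2
        nlinarith [nrm_nonneg (node w).2, hKR]
      have h1 : rho (node w) ≤ 2 / ((K:ℝ) * (nrm (node w).1 * nrm (node w).2)) :=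
        rho_le hg hKR hKa hKb
      refine h1.trans ?_
      rw [← div_div, div_eq_mul_one_div (2 / (K:ℝ))]
      apply mul_le_mul_of_nonneg_left (ang_diff hg) (by positivity)
    calc ∑ w ∈ (level n).filter
          (fun w => ¬(N2 (node w).1 ≤ (K : ℤ) ^ 2 ∨ N2 (node w).2 ≤ (K : ℤ) ^ 2)),
          rho (node w)
        ≤ ∑ w ∈ (level n).filter
          (fun w => ¬(N2 (node w).1 ≤ (K : ℤ) ^ 2 ∨ N2 (node w).2 ≤ (K : ℤ) ^ 2)),
          (2 / (K:ℝ)) * (ang (node w).2 - ang (node w).1) := Finset.sum_le_sum hterm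
      _ ≤ ∑ w ∈ level n, (2 / (K:ℝ)) * (ang (node w).2 - ang (node w).1) := by
          apply Finset.sum_le_sum_of_subset_of_nonneg (Finset.filter_subset _ _)
          intro w hw _
          exact mul_nonneg (by positivity) (ang_diff_nonneg (good_node w))
      _ = (2 / (K:ℝ)) * ∑ w ∈ level n, (ang (node w).2 - ang (node w).1) := by
          rw [Finset.mul_sum]
      _ = (2 / (K:ℝ)) * (Real.pi / 2) := by rw [ang_sum n]
      _ = Real.pi / K := by ring
  linarith

lemma Rn_small {ε : ℝ} (hε : 0 < ε) : ∃ N : ℕ, Rn (N + 1) ≤ ε := by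
  set K : ℕ := max 1 ⌈2 * Real.pi / ε⌉₊ with hKdef
  have hK1 : 1 ≤ K := le_max_left _ _
  have hKR : (1:ℝ) ≤ (K:ℝ) := by exact_mod_cast hK1
  have hKpos : (0:ℝ) < (K:ℝ) := by linarith
  have hKpi : Real.pi / K ≤ ε / 2 := by
    have h1 : 2 * Real.pi / ε ≤ (K : ℝ) := by
      refine le_trans (Nat.le_ceil _) ?_
      exact_mod_cast le_max_right 1 ⌈2 * Real.pi / ε⌉₊
    rw [div_le_iff₀ hε] at h1
    rw [div_le_iff₀ hKpos]
    nlinarith [Real.pi_pos]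
  set M : ℝ := 8 * ((K : ℝ) + 1) ^ 2 / ε with hMdef
  have hMpos : 0 < M := by positivity
  set N : ℕ := ⌈M ^ 2⌉₊ with hNdef
  have hsqrt : M ≤ Real.sqrt ((N : ℝ) + 1 + 1) := by
    rw [show M = Real.sqrt (M ^ 2) from (Real.sqrt_sq hMpos.le).symm]
    apply Real.sqrt_le_sqrt
    have := Nat.le_ceil (M ^ 2)
    have h2 : ((⌈M ^ 2⌉₊ : ℕ) : ℝ) ≤ (N : ℝ) := by rw [hNdef]
    linarith
  have hb := Rn_bound K (N + 1) hK1
  refine ⟨N, hb.trans ?_⟩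
  have h1 : 4 * ((K : ℝ) + 1) ^ 2 / Real.sqrt ((N + 1 : ℕ) + 1) ≤ ε / 2 := by
    have hc : ((N + 1 : ℕ) : ℝ) + 1 = (N : ℝ) + 1 + 1 := by push_cast; ring
    rw [hc]
    have h2 : 4 * ((K : ℝ) + 1) ^ 2 / Real.sqrt ((N : ℝ) + 1 + 1)
        ≤ 4 * ((K : ℝ) + 1) ^ 2 / M :=
      div_le_div_of_nonneg_left (by positivity) hMpos hsqrt
    refine h2.trans (le_of_eq ?_)
    rw [hMdef]
    have hKne : ((K:ℝ)+1) ≠ 0 := by positivity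
    have hεne : ε ≠ 0 := ne_of_gt hε
    field_simp
    ring
  linarith

-- ===== summability =====

def cum (N : ℕ) : Finset (List Bool) := (Finset.range (N + 1)).biUnion level

lemma sum_cum (N : ℕ) : ∑ w ∈ cum N, fP (node w) = 2 - Rn (N + 1) := by
  rw [cum, Finset.sum_biUnion]
  · have := partial_sum N
    unfold En at this
    exact this
  · intro a _ b _ hab
    rw [Function.onFun]
    rw [Finset.disjoint_left]
    intro w hwa hwb
    exact hab (by rw [← mem_level.mp hwa, mem_level.mp hwb])

lemma hasSum_F : HasSum (fun w => fP (node w)) 2 := by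
  apply hasSum_of_isLUB_of_nonneg 2 (fun w => fP_nonneg (good_node w))
  constructor
  · rintro x ⟨s, rfl⟩
    set N := s.sup List.length with hN
    have hsub : s ⊆ cum N := by
      intro w hw
      rw [cum, Finset.mem_biUnion]
      exact ⟨w.length, Finset.mem_range.mpr (Nat.lt_succ_of_le (Finset.le_sup hw)),
        mem_level.mpr rfl⟩
    calc ∑ w ∈ s, fP (node w)
        ≤ ∑ w ∈ cum N, fP (node w) :=
          Finset.sum_le_sum_of_subset_of_nonneg hsub
            (fun w _ _ => fP_nonneg (good_node w))
      _ = 2 - Rn (N + 1) := sum_cum N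
      _ ≤ 2 := by linarith [Rn_nonneg (N + 1)]
  · intro b hb
    by_contra hlt
    push_neg at hlt
    obtain ⟨N, hN⟩ := Rn_small (by linarith : 0 < (2 - b) / 2)
    have hmem : (2 - Rn (N + 1)) ∈ Set.range (fun s : Finset (List Bool) =>
        ∑ w ∈ s, fP (node w)) := ⟨cum N, sum_cum N⟩
    have := hb hmem
    linarith

noncomputable def eqv : List Bool ≃ {p : P // Good p} :=
  Equiv.ofBijective (fun w => ⟨node w, good_node w⟩)
    ⟨fun w w' h => node_injective (congrArg Subtype.val h),
     fun q => (node_surjective q.2).imp (fun w hw => Subtype.ext hw)⟩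

lemma tsum_good : (∑' q : {p : P // Good p}, fP q.1) = 2 := by
  have h2 : HasSum (fun q : {p : P // Good p} => fP q.1) 2 := by
    rw [← Equiv.hasSum_iff eqv]
    exact hasSum_F
  exact h2.tsum_eq

end Stmt8

theorem stmt8 :
    (∑' p : {p : (ℤ × ℤ) × (ℤ × ℤ) //
        0 ≤ p.1.1 ∧ 0 ≤ p.1.2 ∧ 0 ≤ p.2.1 ∧ 0 ≤ p.2.2 ∧
        p.1.1 * p.2.2 - p.1.2 * p.2.1 = 1},
      (Real.sqrt ((p.1.1.1 : ℝ) ^ 2 + (p.1.1.2 : ℝ) ^ 2)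
        + Real.sqrt ((p.1.2.1 : ℝ) ^ 2 + (p.1.2.2 : ℝ) ^ 2)
        - Real.sqrt (((p.1.1.1 : ℝ) + p.1.2.1) ^ 2 + ((p.1.1.2 : ℝ) + p.1.2.2) ^ 2)))
      = 2 := by
  have key := Stmt8.tsum_good
  rw [← key]
  apply tsum_congr
  intro q
  rw [Stmt8.fP, Stmt8.nrm, Stmt8.nrm, Stmt8.nrm]
  simp only [Prod.fst_add, Prod.snd_add]
  push_cast
  ring_nf
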